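/- Let $Z, \Theta$ be non-negative measurable functions on $R = [u_1, u_2] \times [v_1, v_2]$, non-decreasing in the second and first variables respectively, and suppose there are non-negative integrable weights $a(u,v)$, $b(u,v)$ with $\sup_{v} \int_{u_1}^{u_2} a(u,v)\,du \le \delta_1$, $\sup_u \int_{v_1}^{v_2} b(u,v)\,dv \le \delta_2$, $\delta_1 \delta_2 < 1$, such that $Z(u,v) \le Z(u, v_1) + \int_{v_1}^v a(u,\bar v)\,\Theta(u_2, \bar v)\,d\bar v$ and $\Theta(u, v) \le \Theta(u_1, v) + \int_{u_1}^u b(\bar u, v)\, Z(\bar u, v_2)\,d\bar u$ hold pointwise. Then $\int_{u_1}^{u_2} Z(u, v_2)\,du \le \frac{1}{1 - \delta_1\delta_2} \int_{u_1}^{u_2} Z(u, v_1)\,du + \frac{\delta_1}{1 - \delta_1 \delta_2} \int_{v_1}^{v_2} \Theta(u_1, v)\,dv$. -/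

import Mathlib

open MeasureTheory

theorem stmt_10 (u1 u2 v1 v2 δ1 δ2 : ℝ) (hu : u1 ≤ u2) (hv : v1 ≤ v2)
    (hδ1 : 0 ≤ δ1) (hδ2 : 0 ≤ δ2) (hδ : δ1 * δ2 < 1)
    (Z Θ a b : ℝ → ℝ → ℝ)
    (hZmeas : Measurable (fun q : ℝ × ℝ => Z q.1 q.2))
    (hΘmeas : Measurable (fun q : ℝ × ℝ => Θ q.1 q.2))
    (hameas : Measurable (fun q : ℝ × ℝ => a q.1 q.2))
    (hbmeas : Measurable (fun q : ℝ × ℝ => b q.1 q.2))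
    (hZnn : ∀ u ∈ Set.Icc u1 u2, ∀ v ∈ Set.Icc v1 v2, 0 ≤ Z u v)
    (hΘnn : ∀ u ∈ Set.Icc u1 u2, ∀ v ∈ Set.Icc v1 v2, 0 ≤ Θ u v)
    (hann : ∀ u ∈ Set.Icc u1 u2, ∀ v ∈ Set.Icc v1 v2, 0 ≤ a u v)
    (hbnn : ∀ u ∈ Set.Icc u1 u2, ∀ v ∈ Set.Icc v1 v2, 0 ≤ b u v)
    (hZmono : ∀ u ∈ Set.Icc u1 u2, MonotoneOn (fun v => Z u v) (Set.Icc v1 v2))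
    (hΘmono : ∀ v ∈ Set.Icc v1 v2, MonotoneOn (fun u => Θ u v) (Set.Icc u1 u2))
    (haint : ∀ v ∈ Set.Icc v1 v2, IntervalIntegrable (fun u => a u v) volume u1 u2)
    (hbint : ∀ u ∈ Set.Icc u1 u2, IntervalIntegrable (fun v => b u v) volume v1 v2)
    (ha : ∀ v ∈ Set.Icc v1 v2, (∫ u in u1..u2, a u v) ≤ δ1)
    (hb : ∀ u ∈ Set.Icc u1 u2, (∫ v in v1..v2, b u v) ≤ δ2)
    (hZint1 : IntervalIntegrable (fun u => Z u v1) volume u1 u2)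
    (hZint2 : IntervalIntegrable (fun u => Z u v2) volume u1 u2)
    (hΘint1 : IntervalIntegrable (fun v => Θ u1 v) volume v1 v2)
    (hΘint2 : IntervalIntegrable (fun v => Θ u2 v) volume v1 v2)
    (hZineq : ∀ u ∈ Set.Icc u1 u2, ∀ v ∈ Set.Icc v1 v2,
      Z u v ≤ Z u v1 + ∫ x in v1..v, a u x * Θ u2 x)
    (hΘineq : ∀ u ∈ Set.Icc u1 u2, ∀ v ∈ Set.Icc v1 v2,
      Θ u v ≤ Θ u1 v + ∫ x in u1..u, b x v * Z x v2) :
    (∫ u in u1..u2, Z u v2) ≤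
      (1 / (1 - δ1 * δ2)) * (∫ u in u1..u2, Z u v1) +
        (δ1 / (1 - δ1 * δ2)) * ∫ v in v1..v2, Θ u1 v := by
  have hu2mem : u2 ∈ Set.Icc u1 u2 := ⟨hu, le_refl u2⟩
  have hv2mem : v2 ∈ Set.Icc v1 v2 := ⟨hv, le_refl v2⟩
  set μ := volume.restrict (Set.Ioc u1 u2) with hμ
  set ν := volume.restrict (Set.Ioc v1 v2) with hν
  have hZ1int : Integrable (fun u => Z u v1) μ :=
    (intervalIntegrable_iff_integrableOn_Ioc_of_le hu).mp hZint1
  have hZ2int : Integrable (fun u => Z u v2) μ :=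
    (intervalIntegrable_iff_integrableOn_Ioc_of_le hu).mp hZint2
  have hΘ1int : Integrable (fun x => Θ u1 x) ν :=
    (intervalIntegrable_iff_integrableOn_Ioc_of_le hv).mp hΘint1
  have hΘ2int : Integrable (fun x => Θ u2 x) ν :=
    (intervalIntegrable_iff_integrableOn_Ioc_of_le hv).mp hΘint2
  have ha' : ∀ x ∈ Set.Icc v1 v2, Integrable (fun u => a u x) μ := fun x hx =>
    (intervalIntegrable_iff_integrableOn_Ioc_of_le hu).mp (haint x hx)
  have hb' : ∀ u ∈ Set.Icc u1 u2, Integrable (fun x => b u x) ν := fun u hu' =>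
    (intervalIntegrable_iff_integrableOn_Ioc_of_le hv).mp (hbint u hu')
  have haI : ∀ x ∈ Set.Icc v1 v2, (∫ u, a u x ∂μ) ≤ δ1 := fun x hx => by
    have := ha x hx; rwa [intervalIntegral.integral_of_le hu] at this
  have hbI : ∀ u ∈ Set.Icc u1 u2, (∫ x, b u x ∂ν) ≤ δ2 := fun u hu' => by
    have := hb u hu'; rwa [intervalIntegral.integral_of_le hv] at this
  -- measurability bits
  have mΘ2 : Measurable (fun x : ℝ => Θ u2 x) := hΘmeas.comp measurable_prodMk_left
  have mZ2 : Measurable (fun u : ℝ => Z u v2) :=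
    hZmeas.comp (measurable_id.prodMk measurable_const)
  -- integrability of the product functions
  have hg : Integrable (fun q : ℝ × ℝ => a q.2 q.1 * Θ u2 q.1) (ν.prod μ) := by
    refine (integrable_prod_iff ?_).mpr ⟨?_, ?_⟩
    · exact ((hameas.comp measurable_swap).mul (mΘ2.comp measurable_fst)).aestronglyMeasurable
    · filter_upwards [ae_restrict_mem measurableSet_Ioc] with x hx
      exact (ha' x (Set.Ioc_subset_Icc_self hx)).mul_const (Θ u2 x)
    · refine Integrable.mono' (hΘ2int.const_mul δ1) ?_ ?_
      · exact (((hameas.comp measurable_swap).mul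
          (mΘ2.comp measurable_fst)).aestronglyMeasurable.norm.integral_prod_right')
      · filter_upwards [ae_restrict_mem measurableSet_Ioc] with x hx
        have hx' := Set.Ioc_subset_Icc_self hx
        have hnn : 0 ≤ Θ u2 x := hΘnn u2 hu2mem x hx'
        have e1 : (∫ u, ‖a u x * Θ u2 x‖ ∂μ) = (∫ u, a u x ∂μ) * Θ u2 x := by
          rw [← integral_mul_const]
          refine integral_congr_ae ?_
          filter_upwards [ae_restrict_mem measurableSet_Ioc] with u hu'
          have : 0 ≤ a u x := hann u (Set.Ioc_subset_Icc_self hu') x hx'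
          rw [Real.norm_of_nonneg (mul_nonneg this hnn)]
        rw [Real.norm_of_nonneg (integral_nonneg fun u => norm_nonneg _), e1]
        exact mul_le_mul_of_nonneg_right (haI x hx') hnn
  have hh : Integrable (fun q : ℝ × ℝ => b q.1 q.2 * Z q.1 v2) (μ.prod ν) := by
    refine (integrable_prod_iff ?_).mpr ⟨?_, ?_⟩
    · exact (hbmeas.mul (mZ2.comp measurable_fst)).aestronglyMeasurable
    · filter_upwards [ae_restrict_mem measurableSet_Ioc] with u hu'
      exact (hb' u (Set.Ioc_subset_Icc_self hu')).mul_const (Z u v2)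
    · refine Integrable.mono' (hZ2int.const_mul δ2) ?_ ?_
      · exact ((hbmeas.mul
          (mZ2.comp measurable_fst)).aestronglyMeasurable.norm.integral_prod_right')
      · filter_upwards [ae_restrict_mem measurableSet_Ioc] with u hu'
        have hu'' := Set.Ioc_subset_Icc_self hu'
        have hnn : 0 ≤ Z u v2 := hZnn u hu'' v2 hv2mem
        have e1 : (∫ x, ‖b u x * Z u v2‖ ∂ν) = (∫ x, b u x ∂ν) * Z u v2 := by
          rw [← integral_mul_const]
          refine integral_congr_ae ?_
          filter_upwards [ae_restrict_mem measurableSet_Ioc] with x hx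
          have : 0 ≤ b u x := hbnn u hu'' x (Set.Ioc_subset_Icc_self hx)
          rw [Real.norm_of_nonneg (mul_nonneg this hnn)]
        rw [Real.norm_of_nonneg (integral_nonneg fun x => norm_nonneg _), e1]
        exact mul_le_mul_of_nonneg_right (hbI u hu'') hnn
  -- Step 1
  have step1 : (∫ u, Z u v2 ∂μ) ≤ (∫ u, Z u v1 ∂μ) + δ1 * ∫ x, Θ u2 x ∂ν := by
    have hgu : Integrable (fun u => ∫ x, a u x * Θ u2 x ∂ν) μ := by
      have := hg.swap.integral_prod_left
      simpa using this
    have h1 : (∫ u, Z u v2 ∂μ) ≤ ∫ u, (Z u v1 + ∫ x, a u x * Θ u2 x ∂ν) ∂μ := by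
      refine integral_mono_ae hZ2int (hZ1int.add hgu) ?_
      filter_upwards [ae_restrict_mem measurableSet_Ioc] with u hu'
      have := hZineq u (Set.Ioc_subset_Icc_self hu') v2 hv2mem
      rwa [intervalIntegral.integral_of_le hv] at this
    have h2 : (∫ u, (Z u v1 + ∫ x, a u x * Θ u2 x ∂ν) ∂μ)
        = (∫ u, Z u v1 ∂μ) + ∫ u, (∫ x, a u x * Θ u2 x ∂ν) ∂μ :=
      integral_add hZ1int hgu
    have h3 : (∫ u, (∫ x, a u x * Θ u2 x ∂ν) ∂μ)
        = ∫ x, (∫ u, a u x * Θ u2 x ∂μ) ∂ν :=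
      (integral_integral_swap (f := fun x u => a u x * Θ u2 x) hg).symm
    have h4 : (∫ x, (∫ u, a u x * Θ u2 x ∂μ) ∂ν) ≤ ∫ x, δ1 * Θ u2 x ∂ν := by
      refine integral_mono_ae hg.integral_prod_left (hΘ2int.const_mul δ1) ?_
      filter_upwards [ae_restrict_mem measurableSet_Ioc] with x hx
      have hx' := Set.Ioc_subset_Icc_self hx
      have hnn : 0 ≤ Θ u2 x := hΘnn u2 hu2mem x hx'
      calc (∫ u, a u x * Θ u2 x ∂μ) = (∫ u, a u x ∂μ) * Θ u2 x := integral_mul_const _ _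
        _ ≤ δ1 * Θ u2 x := mul_le_mul_of_nonneg_right (haI x hx') hnn
    have h5 : (∫ x, δ1 * Θ u2 x ∂ν) = δ1 * ∫ x, Θ u2 x ∂ν := integral_const_mul _ _
    calc (∫ u, Z u v2 ∂μ) ≤ _ := h1
      _ = (∫ u, Z u v1 ∂μ) + ∫ u, (∫ x, a u x * Θ u2 x ∂ν) ∂μ := h2
      _ = (∫ u, Z u v1 ∂μ) + ∫ x, (∫ u, a u x * Θ u2 x ∂μ) ∂ν := by rw [h3]
      _ ≤ (∫ u, Z u v1 ∂μ) + ∫ x, δ1 * Θ u2 x ∂ν := add_le_add_right h4 _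
      _ = (∫ u, Z u v1 ∂μ) + δ1 * ∫ x, Θ u2 x ∂ν := by rw [h5]
  -- Step 2
  have step2 : (∫ x, Θ u2 x ∂ν) ≤ (∫ x, Θ u1 x ∂ν) + δ2 * ∫ u, Z u v2 ∂μ := by
    have hhu : Integrable (fun x => ∫ u, b u x * Z u v2 ∂μ) ν := by
      have := hh.swap.integral_prod_left
      simpa using this
    have h1 : (∫ x, Θ u2 x ∂ν) ≤ ∫ x, (Θ u1 x + ∫ u, b u x * Z u v2 ∂μ) ∂ν := by
      refine integral_mono_ae hΘ2int (hΘ1int.add hhu) ?_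
      filter_upwards [ae_restrict_mem measurableSet_Ioc] with x hx
      have := hΘineq u2 hu2mem x (Set.Ioc_subset_Icc_self hx)
      rwa [intervalIntegral.integral_of_le hu] at this
    have h2 : (∫ x, (Θ u1 x + ∫ u, b u x * Z u v2 ∂μ) ∂ν)
        = (∫ x, Θ u1 x ∂ν) + ∫ x, (∫ u, b u x * Z u v2 ∂μ) ∂ν :=
      integral_add hΘ1int hhu
    have h3 : (∫ x, (∫ u, b u x * Z u v2 ∂μ) ∂ν)
        = ∫ u, (∫ x, b u x * Z u v2 ∂ν) ∂μ :=
      (integral_integral_swap (f := fun u x => b u x * Z u v2) hh).symm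
    have h4 : (∫ u, (∫ x, b u x * Z u v2 ∂ν) ∂μ) ≤ ∫ u, δ2 * Z u v2 ∂μ := by
      refine integral_mono_ae hh.integral_prod_left (hZ2int.const_mul δ2) ?_
      filter_upwards [ae_restrict_mem measurableSet_Ioc] with u hu'
      have hu'' := Set.Ioc_subset_Icc_self hu'
      have hnn : 0 ≤ Z u v2 := hZnn u hu'' v2 hv2mem
      calc (∫ x, b u x * Z u v2 ∂ν) = (∫ x, b u x ∂ν) * Z u v2 := integral_mul_const _ _
        _ ≤ δ2 * Z u v2 := mul_le_mul_of_nonneg_right (hbI u hu'') hnn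
    have h5 : (∫ u, δ2 * Z u v2 ∂μ) = δ2 * ∫ u, Z u v2 ∂μ := integral_const_mul _ _
    calc (∫ x, Θ u2 x ∂ν) ≤ _ := h1
      _ = (∫ x, Θ u1 x ∂ν) + ∫ x, (∫ u, b u x * Z u v2 ∂μ) ∂ν := h2
      _ = (∫ x, Θ u1 x ∂ν) + ∫ u, (∫ x, b u x * Z u v2 ∂ν) ∂μ := by rw [h3]
      _ ≤ (∫ x, Θ u1 x ∂ν) + ∫ u, δ2 * Z u v2 ∂μ := add_le_add_right h4 _
      _ = (∫ x, Θ u1 x ∂ν) + δ2 * ∫ u, Z u v2 ∂μ := by rw [h5]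
  -- conclusion
  have hc : 0 < 1 - δ1 * δ2 := by linarith
  rw [intervalIntegral.integral_of_le hu, intervalIntegral.integral_of_le hu,
    intervalIntegral.integral_of_le hv]
  set I := ∫ u, Z u v2 ∂μ
  set A := ∫ u, Z u v1 ∂μ
  set T1 := ∫ x, Θ u1 x ∂ν
  have key : (1 - δ1 * δ2) * I ≤ A + δ1 * T1 := by nlinarith [mul_le_mul_of_nonneg_left step2 hδ1]
  have : I ≤ (A + δ1 * T1) / (1 - δ1 * δ2) := (le_div_iff₀ hc).mpr (by linarith)
  calc I ≤ (A + δ1 * T1) / (1 - δ1 * δ2) := this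
    _ = 1 / (1 - δ1 * δ2) * A + δ1 / (1 - δ1 * δ2) * T1 := by ring
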